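/- Suppose $q$ is a prime, and $r \ge s \ge 0$ are integers with $p n = q^{r+s}(q^{r-s} + 1)$, where $p$ is a prime and $n$ is a positive integer with $p > n$. Then $s = 0$, $n = q^r$, $p = q^r + 1$, $q = 2$, and $r$ is a power of $2$ (i.e., $p$ is a Fermat prime), unless $r = 0$ (in which case $pn = 2$). -/

import Mathlib

/-- If `2^r + 1` is prime with `r ≥ 1`, then `r` is a power of 2. -/
lemma fermat_aux {r : ℕ} (hr : 0 < r) (hp : Nat.Prime (2 ^ r + 1)) : ∃ m, r = 2 ^ m := by
  set d := r.factorization 2 with hd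
  set k := r / 2 ^ d with hk
  have hrk : 2 ^ d * k = r := Nat.ordProj_mul_ordCompl_eq_self r 2
  have hkodd : Odd k := by
    have := Nat.not_dvd_ordCompl (by norm_num : Nat.Prime 2) hr.ne'
    rw [Nat.odd_iff, ← Nat.two_dvd_ne_zero]; exact this
  have hdvd : 2 ^ 2 ^ d + 1 ∣ 2 ^ r + 1 := by
    have := Odd.nat_add_dvd_pow_add_pow (2 ^ 2 ^ d) 1 hkodd
    simpa [← pow_mul, hrk] using this
  have h1 : 2 ^ 2 ^ d + 1 ≠ 1 := by have : 0 < 2 ^ 2 ^ d := pow_pos (by norm_num) _; omega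
  have := (Nat.Prime.eq_one_or_self_of_dvd hp _ hdvd).resolve_left h1
  have : 2 ^ 2 ^ d = 2 ^ r := by omega
  exact ⟨d, (Nat.pow_right_injective le_rfl this).symm⟩

/-- If `p * n = q^(r+s) * (q^(r-s) + 1)` with `q, p` prime, `p > n ≥ 1`, `r ≥ s ≥ 0`,
then either `r = 0` and `p * n = 2`, or `s = 0`, `n = q^r`, `p = q^r + 1` is a Fermat
prime (`q = 2` and `r` a power of `2`). -/
theorem stmt7 (q p n r s : ℕ) (hq : q.Prime) (hp : p.Prime) (hn : 0 < n) (hpn : n < p)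
    (hrs : s ≤ r) (heq : p * n = q ^ (r + s) * (q ^ (r - s) + 1)) :
    (r = 0 ∧ p * n = 2) ∨
      (s = 0 ∧ n = q ^ r ∧ p = q ^ r + 1 ∧ q = 2 ∧ ∃ m, r = 2 ^ m) := by
  rcases Nat.eq_zero_or_pos r with hr | hr
  · left
    have hs : s = 0 := le_antisymm (hr ▸ hrs) s.zero_le
    subst hr; subst hs
    simpa using heq
  · right
    have hq1 : 1 < q := hq.one_lt
    have key : q ^ (r + s) * q ^ (r - s) = q ^ r * q ^ r := by
      rw [← pow_add, ← pow_add]; congr 1; omega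
    have hqr1 : 1 ≤ q ^ r := Nat.one_le_pow _ _ hq.pos
    have hpn2 : q ^ r * q ^ r < p * n := by
      calc q ^ r * q ^ r < q ^ (r + s) * q ^ (r - s) + q ^ (r + s) := by
            rw [key]; have : 0 < q ^ (r + s) := pow_pos hq.pos _; omega
        _ = q ^ (r + s) * (q ^ (r - s) + 1) := by ring
        _ = p * n := heq.symm
    have hpqr : q ^ r < p := by
      by_contra h
      push_neg at h
      have : p * p ≤ q ^ r * q ^ r := Nat.mul_le_mul h h
      have : p * n < p * p := Nat.mul_lt_mul_of_le_of_lt le_rfl hpn hp.pos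
      omega
    have hpq : q < p := lt_of_le_of_lt (Nat.le_self_pow hr.ne' q) hpqr
    -- p divides the RHS
    have hdvd : p ∣ q ^ (r + s) * (q ^ (r - s) + 1) := heq ▸ Dvd.intro n rfl
    have hpd : p ∣ q ^ (r - s) + 1 := by
      rcases (Nat.Prime.dvd_mul hp).mp hdvd with h | h
      · exfalso
        have := (Nat.prime_dvd_prime_iff_eq hp hq).mp (hp.dvd_of_dvd_pow h)
        omega
      · exact h
    have hple : p ≤ q ^ (r - s) + 1 := Nat.le_of_dvd (by positivity) hpd
    have hrs2 : q ^ (r - s) ≤ q ^ r := Nat.pow_le_pow_right hq.pos (by omega)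
    have heqp : q ^ (r - s) = q ^ r := by omega
    have hs0 : r - s = r := Nat.pow_right_injective hq.two_le heqp
    have hs : s = 0 := by omega
    have hpval : p = q ^ r + 1 := by omega
    have hnval : n = q ^ r := by
      have : p * n = p * q ^ r := by
        rw [heq, hs, hpval, Nat.sub_zero, Nat.add_zero]; ring
      exact Nat.eq_of_mul_eq_mul_left hp.pos this
    have hq2 : q = 2 := by
      rcases hq.eq_two_or_odd' with h | h
      · exact h
      · exfalso
        have hodd : Odd (q ^ r) := h.pow
        have : Even p := by rw [hpval]; exact hodd.add_one
        have := (Nat.Prime.even_iff hp).mp this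
        omega
    refine ⟨hs, hnval, hpval, hq2, fermat_aux hr ?_⟩
    rwa [← hq2, ← hpval]
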